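/- arXiv:2203.14408 — 2 statements merged into one kernel-verified Lean document; each statement's English description precedes it below -/
import Mathlib

section
/- Let A, B, C, D, F be real matrices of compatible sizes, s a complex number such that sI - A is invertible and I - DF is invertible, and suppose sI - A - BF(I - DF)⁻¹C is invertible. Define Q(s) = [D + C(sI - A)⁻¹B]F. Then I - Q(s) is invertible and (I - Q(s))⁻¹ = (I - DF)⁻¹ + (I - DF)⁻¹ C [sI - A - BF(I - DF)⁻¹C]⁻¹ B F (I - DF)⁻¹. -/
open Matrix

/-- Auxiliary abstract version: if `M`, `E`, `K = M - V E⁻¹ W` are invertible, then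
`E⁻¹ + E⁻¹ W K⁻¹ V E⁻¹` is a right inverse of `E - W M⁻¹ V`. -/
lemma stmt7_aux {n p : Type*} [Fintype n] [Fintype p] [DecidableEq n] [DecidableEq p]
    (M : Matrix n n ℂ) (E : Matrix p p ℂ) (V : Matrix n p ℂ) (W : Matrix p n ℂ)
    (hM : IsUnit M) (hE : IsUnit E) (hK : IsUnit (M - V * E⁻¹ * W)) :
    (E - W * M⁻¹ * V)
      * (E⁻¹ + E⁻¹ * W * (M - V * E⁻¹ * W)⁻¹ * V * E⁻¹) = 1 := by
  obtain ⟨K, hKdef⟩ : ∃ K, K = M - V * E⁻¹ * W := ⟨_, rfl⟩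
  rw [← hKdef] at hK ⊢
  have hMM : M⁻¹ * M = 1 := Matrix.nonsing_inv_mul M ((Matrix.isUnit_iff_isUnit_det M).mp hM)
  have hEE : E * E⁻¹ = 1 := Matrix.mul_nonsing_inv E ((Matrix.isUnit_iff_isUnit_det E).mp hE)
  have hKK : K * K⁻¹ = 1 := Matrix.mul_nonsing_inv K ((Matrix.isUnit_iff_isUnit_det K).mp hK)
  obtain ⟨G, hG⟩ : ∃ G, G = K⁻¹ * (V * E⁻¹) := ⟨_, rfl⟩
  obtain ⟨H, hH⟩ : ∃ H, H = M⁻¹ * (V * E⁻¹) := ⟨_, rfl⟩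
  -- key identity : G = H + H * (W * G)
  have hkey : G = H + H * (W * G) := by
    have h1 : M⁻¹ * M * G = G := by rw [hMM, Matrix.one_mul]
    have h2 : M = K + V * E⁻¹ * W := by rw [hKdef]; noncomm_ring
    have h3 : M⁻¹ * (K + V * E⁻¹ * W) * G = G := by rw [← h2]; exact h1
    have h4 : M⁻¹ * (K + V * E⁻¹ * W) * G
        = M⁻¹ * (K * G) + M⁻¹ * (V * E⁻¹) * (W * G) := by
      simp only [Matrix.mul_add, Matrix.add_mul, Matrix.sub_mul, Matrix.mul_sub,
        Matrix.mul_assoc]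
    have h5 : K * G = V * E⁻¹ := by
      rw [hG, ← Matrix.mul_assoc, hKK, Matrix.one_mul]
    rw [h4, h5, ← hH] at h3
    exact h3.symm
  have h6 : (E - W * M⁻¹ * V) * (E⁻¹ + E⁻¹ * W * K⁻¹ * V * E⁻¹)
      = E * E⁻¹ + (E * E⁻¹) * (W * G)
        + W * (G - (H + H * (W * G))) - W * G + 1 - 1 := by
    rw [hG, hH]
    simp only [Matrix.mul_add, Matrix.add_mul, Matrix.sub_mul, Matrix.mul_sub,
      Matrix.mul_assoc]
    abel
  rw [h6, ← hkey, sub_self, Matrix.mul_zero, hEE]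
  noncomm_ring

/-- Key identity in the proof that the interconnection formula subsumes Mason's Gain
Formula: with `Q(s) = [D + C(sI - A)⁻¹B]F`, if `sI - A`, `I - DF` and
`sI - A - BF(I - DF)⁻¹C` are invertible, then `I - Q(s)` is invertible and
`(I - Q(s))⁻¹ = (I - DF)⁻¹ + (I - DF)⁻¹C[sI - A - BF(I - DF)⁻¹C]⁻¹BF(I - DF)⁻¹`. -/
theorem stmt7 (n m p : ℕ)
    (A : Matrix (Fin n) (Fin n) ℂ) (B : Matrix (Fin n) (Fin m) ℂ)
    (C : Matrix (Fin p) (Fin n) ℂ) (D : Matrix (Fin p) (Fin m) ℂ)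
    (F : Matrix (Fin m) (Fin p) ℂ) (s : ℂ)
    (hsA : IsUnit (s • (1 : Matrix (Fin n) (Fin n) ℂ) - A))
    (hDF : IsUnit (1 - D * F))
    (hcl : IsUnit (s • (1 : Matrix (Fin n) (Fin n) ℂ) - A
        - B * F * (1 - D * F)⁻¹ * C)) :
    IsUnit (1 - (D + C * (s • (1 : Matrix (Fin n) (Fin n) ℂ) - A)⁻¹ * B) * F) ∧
    (1 - (D + C * (s • (1 : Matrix (Fin n) (Fin n) ℂ) - A)⁻¹ * B) * F)⁻¹
      = (1 - D * F)⁻¹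
        + (1 - D * F)⁻¹ * C
          * (s • (1 : Matrix (Fin n) (Fin n) ℂ) - A - B * F * (1 - D * F)⁻¹ * C)⁻¹
          * B * F * (1 - D * F)⁻¹ := by
  have key := stmt7_aux (s • (1 : Matrix (Fin n) (Fin n) ℂ) - A) (1 - D * F) (B * F) C
    hsA hDF hcl
  have h7 : 1 - (D + C * (s • (1 : Matrix (Fin n) (Fin n) ℂ) - A)⁻¹ * B) * F
      = (1 - D * F) - C * (s • (1 : Matrix (Fin n) (Fin n) ℂ) - A)⁻¹ * (B * F) := by
    rw [Matrix.add_mul, sub_add_eq_sub_sub, Matrix.mul_assoc]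
  rw [h7]
  constructor
  · apply (Matrix.isUnit_iff_isUnit_det _).mpr
    have hdet := congrArg Matrix.det key
    rw [Matrix.det_mul, Matrix.det_one] at hdet
    exact IsUnit.of_mul_eq_one _ hdet
  · rw [Matrix.inv_eq_right_inv key]
    simp only [Matrix.mul_assoc]
end

section
/- Under the hypotheses of the previous identity, with additionally G of compatible size and P(s) = [D + C(sI - A)⁻¹B]G, the transfer matrix of the interconnected state-space realization equals Mason's formula: (I - DF)⁻¹C [sI - A - BF(I - DF)⁻¹C]⁻¹ B[I + F(I - DF)⁻¹D]G + (I - DF)⁻¹DG = (I - Q(s))⁻¹ P(s). -/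
open Matrix

/-- Proposition (Mason): the transfer matrix of the interconnected state-space
realization equals Mason's Gain Formula `(I - Q(s))⁻¹P(s)`, where
`Q(s) = [D + C(sI - A)⁻¹B]F` and `P(s) = [D + C(sI - A)⁻¹B]G`. -/
theorem stmt8 (n m p k : ℕ)
    (A : Matrix (Fin n) (Fin n) ℂ) (B : Matrix (Fin n) (Fin m) ℂ)
    (C : Matrix (Fin p) (Fin n) ℂ) (D : Matrix (Fin p) (Fin m) ℂ)
    (F : Matrix (Fin m) (Fin p) ℂ) (G : Matrix (Fin m) (Fin k) ℂ) (s : ℂ)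
    (hsA : IsUnit (s • (1 : Matrix (Fin n) (Fin n) ℂ) - A))
    (hDF : IsUnit (1 - D * F))
    (hcl : IsUnit (s • (1 : Matrix (Fin n) (Fin n) ℂ) - A
        - B * F * (1 - D * F)⁻¹ * C)) :
    (1 - D * F)⁻¹ * C
        * (s • (1 : Matrix (Fin n) (Fin n) ℂ) - A - B * F * (1 - D * F)⁻¹ * C)⁻¹
        * (B * (1 + F * (1 - D * F)⁻¹ * D) * G)
      + (1 - D * F)⁻¹ * D * G
    = (1 - (D + C * (s • (1 : Matrix (Fin n) (Fin n) ℂ) - A)⁻¹ * B) * F)⁻¹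
        * ((D + C * (s • (1 : Matrix (Fin n) (Fin n) ℂ) - A)⁻¹ * B) * G) := by
  set X : Matrix (Fin n) (Fin n) ℂ := s • (1 : Matrix (Fin n) (Fin n) ℂ) - A with hXdef
  set E : Matrix (Fin p) (Fin p) ℂ := 1 - D * F with hEdef
  set M : Matrix (Fin n) (Fin n) ℂ := X - B * F * E⁻¹ * C with hMdef
  have hXd : IsUnit X.det := (Matrix.isUnit_iff_isUnit_det X).mp hsA
  have hEd : IsUnit E.det := (Matrix.isUnit_iff_isUnit_det E).mp hDF
  have hMd : IsUnit M.det := (Matrix.isUnit_iff_isUnit_det M).mp hcl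
  -- universally quantified cancellation helpers
  have hXi : ∀ {l : Type} (Z : Matrix (Fin n) l ℂ), X⁻¹ * (X * Z) = Z := by
    intro l Z; rw [← Matrix.mul_assoc, Matrix.nonsing_inv_mul X hXd, Matrix.one_mul]
  have hMMi : ∀ {l : Type} (Z : Matrix (Fin n) l ℂ), M * (M⁻¹ * Z) = Z := by
    intro l Z; rw [← Matrix.mul_assoc, Matrix.mul_nonsing_inv M hMd, Matrix.one_mul]
  have hE : ∀ {l : Type} (Z : Matrix (Fin p) l ℂ), D * (F * (E⁻¹ * Z)) = E⁻¹ * Z - Z := by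
    intro l Z
    have h : E * (E⁻¹ * Z) = Z := by
      rw [← Matrix.mul_assoc, Matrix.mul_nonsing_inv E hEd, Matrix.one_mul]
    calc D * (F * (E⁻¹ * Z)) = E⁻¹ * Z - (1 - D * F) * (E⁻¹ * Z) := by
          rw [Matrix.sub_mul, Matrix.one_mul, ← Matrix.mul_assoc]
          rw [Matrix.mul_assoc]
          abel
      _ = E⁻¹ * Z - Z := by rw [← hEdef, h]
  have hE1 : D * (F * E⁻¹) = E⁻¹ - 1 := by
    have := hE (1 : Matrix (Fin p) (Fin p) ℂ)
    rwa [Matrix.mul_one] at this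
  have hBFEC : ∀ {l : Type} (Z : Matrix (Fin n) l ℂ),
      B * (F * (E⁻¹ * (C * Z))) = X * Z - M * Z := by
    intro l Z
    rw [← Matrix.sub_mul, hMdef, sub_sub_cancel, Matrix.mul_assoc, Matrix.mul_assoc,
      Matrix.mul_assoc]
  -- key identity 1 : (1 - Q) * LHS = P
  have key1 : (1 - (D + C * X⁻¹ * B) * F) *
      (E⁻¹ * C * M⁻¹ * (B * (1 + F * E⁻¹ * D) * G) + E⁻¹ * D * G)
      = (D + C * X⁻¹ * B) * G := by
    simp only [Matrix.mul_add, Matrix.add_mul, Matrix.sub_mul, Matrix.mul_sub,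
      Matrix.one_mul, Matrix.mul_one, Matrix.mul_assoc, hE, hBFEC, hXi, hMMi]
    abel
  -- key identity 2 : (1 - Q) has a right inverse, hence is a unit
  have key2 : (1 - (D + C * X⁻¹ * B) * F) *
      (E⁻¹ + E⁻¹ * C * M⁻¹ * (B * (F * E⁻¹))) = 1 := by
    simp only [Matrix.mul_add, Matrix.add_mul, Matrix.sub_mul, Matrix.mul_sub,
      Matrix.one_mul, Matrix.mul_one, Matrix.mul_assoc, hE, hE1, hBFEC, hXi, hMMi]
    abel
  have hQd : IsUnit (1 - (D + C * X⁻¹ * B) * F).det := by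
    apply IsUnit.of_mul_eq_one (E⁻¹ + E⁻¹ * C * M⁻¹ * (B * (F * E⁻¹))).det
    rw [← Matrix.det_mul, key2, Matrix.det_one]
  calc E⁻¹ * C * M⁻¹ * (B * (1 + F * E⁻¹ * D) * G) + E⁻¹ * D * G
      = (1 - (D + C * X⁻¹ * B) * F)⁻¹ * ((1 - (D + C * X⁻¹ * B) * F) *
        (E⁻¹ * C * M⁻¹ * (B * (1 + F * E⁻¹ * D) * G) + E⁻¹ * D * G)) := by
        conv_rhs => rw [← Matrix.mul_assoc, Matrix.nonsing_inv_mul _ hQd, Matrix.one_mul]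
    _ = (1 - (D + C * X⁻¹ * B) * F)⁻¹ * ((D + C * X⁻¹ * B) * G) := by rw [key1]
end
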